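/- A metric space (X,d) is cofinally complete if and only if for every almost uniformly continuous function f: X → ℝ that is never zero, the function 1/f is almost bounded. -/

import Mathlib

open Metric Filter

/-- A sequence is cofinally Cauchy if for every ε>0 there is an infinite index set
on which all pairwise distances are < ε. -/
def CofinallyCauchy {X : Type*} [MetricSpace X] (x : ℕ → X) : Prop :=
  ∀ ε > 0, ∃ N : Set ℕ, N.Infinite ∧ ∀ n ∈ N, ∀ j ∈ N, dist (x n) (x j) < ε

/-- A function is almost bounded if for every ε>0 there is δ>0 such that the image of
every set of diameter < δ is contained in a finite union of open ε-balls. -/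
def AlmostBounded {X Y : Type*} [MetricSpace X] [MetricSpace Y] (f : X → Y) : Prop :=
  ∀ ε > 0, ∃ δ > 0, ∀ A : Set X, EMetric.diam A < ENNReal.ofReal δ →
    ∃ B : Finset Y, f '' A ⊆ ⋃ b ∈ B, Metric.ball b ε

/-- A metric space is cofinally complete if every cofinally Cauchy sequence clusters. -/
def CofinallyComplete (X : Type*) [MetricSpace X] : Prop :=
  ∀ x : ℕ → X, CofinallyCauchy x → ∃ p : X, MapClusterPt p atTop x

/-- The local total boundedness functional. -/
noncomputable def tFun {X : Type*} [MetricSpace X] (x : X) : ℝ :=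
  sSup {ε : ℝ | 0 < ε ∧ TotallyBounded (Metric.ball x ε)}

private lemma cover_of_bounded {S : Set ℝ} (hS : Bornology.IsBounded S) {ε : ℝ} (hε : 0 < ε) :
    ∃ B : Finset ℝ, S ⊆ ⋃ b ∈ B, Metric.ball b ε := by
  obtain ⟨C, hC⟩ := hS.subset_closedBall 0
  have htb : TotallyBounded S :=
    (isCompact_closedBall (0:ℝ) C).totallyBounded.subset hC
  obtain ⟨t, ht, hsub⟩ := (totallyBounded_iff.mp htb) ε hε
  refine ⟨ht.toFinset, ?_⟩
  simpa [Set.Finite.mem_toFinset] using hsub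

private lemma cont_inf' {ι X : Type*} [TopologicalSpace X] (S : Finset ι) (hS : S.Nonempty)
    (g : ι → X → ℝ) (hg : ∀ i, Continuous (g i)) :
    Continuous fun w => S.inf' hS fun i => g i w := by
  induction hS using Finset.Nonempty.cons_induction with
  | singleton a => simpa using hg a
  | cons a s ha hs ih =>
      have heq : ∀ w, (Finset.cons a s ha).inf' (Finset.cons_nonempty ha) (fun i => g i w)
          = min (g a w) (s.inf' hs fun i => g i w) := fun w => Finset.inf'_cons ..
      simp only [heq]
      exact (hg a).min ih

/-- X is cofinally complete iff for every almost uniformly continuous real-valued f that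
is never zero, 1/f is almost bounded. -/
theorem cofinallyComplete_iff_inv_almostBounded {X : Type*} [MetricSpace X] :
    CofinallyComplete X ↔
      ∀ f : X → ℝ, Continuous f → AlmostBounded f → (∀ x, f x ≠ 0) →
        AlmostBounded (fun x => (f x)⁻¹) := by
  constructor
  · intro hX f hf _hfab hf0
    show ∀ ε > 0, ∃ δ > 0, ∀ A : Set X, EMetric.diam A < ENNReal.ofReal δ →
      ∃ B : Finset ℝ, (fun x => (f x)⁻¹) '' A ⊆ ⋃ b ∈ B, Metric.ball b ε
    intro ε hε
    by_contra hcon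
    push_neg at hcon
    set g : X → ℝ := fun w => (f w)⁻¹ with hgdef
    have hgc : Continuous g := hf.inv₀ hf0
    choose A hAd hAnc using fun n : ℕ => hcon (1/((n:ℝ)+1)) (by positivity)
    have hub : ∀ n (M : ℝ), ∃ w ∈ A n, M < ‖g w‖ := by
      intro n M
      by_contra hb
      push_neg at hb
      have hbd : Bornology.IsBounded (g '' A n) := by
        rw [isBounded_iff_forall_norm_le]
        exact ⟨M, by rintro v ⟨w, hw, rfl⟩; exact hb w hw⟩
      obtain ⟨C, hC⟩ := hbd.subset_closedBall 0
      have htb : TotallyBounded (g '' A n) :=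
        (isCompact_closedBall (0:ℝ) C).totallyBounded.subset hC
      obtain ⟨t, ht, hsub⟩ := (totallyBounded_iff.mp htb) ε hε
      exact hAnc n ht.toFinset (by simpa [Set.Finite.mem_toFinset] using hsub)
    choose z hzA hzbig using fun i : ℕ => hub (Nat.unpair i).1 i
    have hzcc : ∀ ε' > 0, ∃ N : Set ℕ, N.Infinite ∧ ∀ n ∈ N, ∀ j ∈ N, dist (z n) (z j) < ε' := by
      intro ε' hε'
      obtain ⟨n, hn⟩ := exists_nat_one_div_lt hε'
      refine ⟨Set.range (fun k => Nat.pair n k), ?_, ?_⟩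
      · apply Set.infinite_range_of_injective
        intro a b hab
        simpa using congrArg (fun i => (Nat.unpair i).2) hab
      · rintro i ⟨k, rfl⟩ j ⟨k', rfl⟩
        have h1 : z (Nat.pair n k) ∈ A n := by simpa [Nat.unpair_pair] using hzA (Nat.pair n k)
        have h2 : z (Nat.pair n k') ∈ A n := by simpa [Nat.unpair_pair] using hzA (Nat.pair n k')
        have hd := lt_of_le_of_lt (EMetric.edist_le_diam_of_mem h1 h2) (hAd n)
        rw [edist_dist] at hd
        have hd' := (ENNReal.ofReal_lt_ofReal_iff (by positivity)).mp hd
        calc dist (z (Nat.pair n k)) (z (Nat.pair n k')) < 1/((n:ℝ)+1) := hd'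
          _ < ε' := hn
    obtain ⟨p, hp⟩ := hX z hzcc
    obtain ⟨r, hr, hball⟩ := Metric.continuousAt_iff.mp hgc.continuousAt (ε := 1) one_pos
    have hfreq := (mapClusterPt_iff_frequently.mp hp) (ball p r) (ball_mem_nhds p hr)
    obtain ⟨i, hi, hzi⟩ := (frequently_atTop.mp hfreq) (Nat.ceil (‖g p‖ + 1))
    have h1 : dist (g (z i)) (g p) < 1 := hball (mem_ball.mp hzi)
    have h2 : ‖g (z i)‖ < ‖g p‖ + 1 := by
      have h3 : ‖g (z i)‖ - ‖g p‖ ≤ ‖g (z i) - g p‖ := norm_sub_norm_le _ _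
      rw [← dist_eq_norm] at h3
      linarith
    have h3 : (‖g p‖ + 1 : ℝ) ≤ (i : ℝ) := le_trans (Nat.le_ceil _) (Nat.cast_le.mpr hi)
    linarith [hzbig i]
  · intro H x hx
    by_contra hnc
    push_neg at hnc
    set h : ℕ → X → ℝ := fun m w => min 1 (((m:ℝ)+1)⁻¹ + ((m:ℝ)+1) * dist w (x m)) with hhdef
    set f : X → ℝ := fun w => ⨅ m, h m w with hfdef
    have hbdd : ∀ w, BddBelow (Set.range fun m => h m w) := by
      intro w
      refine ⟨0, ?_⟩
      rintro v ⟨m, rfl⟩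
      exact le_min one_pos.le (by positivity)
    have hle1 : ∀ m w, h m w ≤ 1 := fun m w => min_le_left _ _
    have hinvle : ∀ m : ℕ, ((m:ℝ)+1)⁻¹ ≤ 1 := by
      intro m
      rw [inv_le_one_iff₀]
      right; linarith [Nat.cast_nonneg (α := ℝ) m]
    have hlow : ∀ (m : ℕ) (w : X), ((m:ℝ)+1)⁻¹ ≤ h m w := by
      intro m w
      exact le_min (hinvle m) (le_add_of_nonneg_right (by positivity))
    have hfle : ∀ m w, f w ≤ h m w := fun m w => ciInf_le (hbdd w) m
    have hfx : ∀ m, f (x m) ≤ ((m:ℝ)+1)⁻¹ := by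
      intro m
      refine (hfle m (x m)).trans ?_
      simp only [hhdef, dist_self, mul_zero, add_zero]
      exact min_le_right _ _
    -- local finiteness
    have hloc : ∀ w₀ : X, ∃ s > 0, {m : ℕ | dist w₀ (x m) < s + ((m:ℝ)+1)⁻¹}.Finite := by
      intro w₀
      by_contra hcon2
      push_neg at hcon2
      apply hnc w₀
      rw [mapClusterPt_iff_frequently]
      intro U hU
      obtain ⟨ε, hε, hUb⟩ := Metric.mem_nhds_iff.mp hU
      rw [frequently_atTop]
      intro i₀
      have hinf : {m : ℕ | dist w₀ (x m) < ε/2 + ((m:ℝ)+1)⁻¹}.Infinite :=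
        hcon2 (ε/2) (half_pos hε)
      obtain ⟨k, hk⟩ := exists_nat_one_div_lt (half_pos hε)
      obtain ⟨m, hm, hmgt⟩ := hinf.exists_gt (max i₀ k)
      refine ⟨m, le_of_lt (lt_of_le_of_lt (le_max_left _ _) hmgt), hUb ?_⟩
      have hkm : ((m:ℝ)+1)⁻¹ ≤ ((k:ℝ)+1)⁻¹ := by
        have hkm0 : ((k:ℝ)+1) ≤ ((m:ℝ)+1) := by
          have : k ≤ m := le_of_lt (lt_of_le_of_lt (le_max_right _ _) hmgt)
          have : (k:ℝ) ≤ (m:ℝ) := Nat.cast_le.mpr this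
          linarith
        exact inv_anti₀ (by positivity) hkm0
      rw [one_div] at hk
      have : dist w₀ (x m) < ε := by
        have := hm
        simp only [Set.mem_setOf_eq] at this
        linarith
      rw [mem_ball, dist_comm]
      exact this
    -- local representation as finite inf
    have hrep : ∀ w₀ : X, ∃ s > 0, ∃ (S : Finset ℕ) (hS : S.Nonempty),
        ∀ w ∈ ball w₀ s, f w = S.inf' hS (fun m => h m w) := by
      intro w₀
      obtain ⟨s, hs, hfin⟩ := hloc w₀
      refine ⟨s, hs, insert 0 hfin.toFinset, Finset.insert_nonempty _ _, ?_⟩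
      intro w hw
      have hout : ∀ m ∉ insert 0 hfin.toFinset, h m w = 1 := by
        intro m hm
        have hm' : ¬ dist w₀ (x m) < s + ((m:ℝ)+1)⁻¹ := by
          intro hcon3
          exact hm (Finset.mem_insert_of_mem (hfin.mem_toFinset.mpr hcon3))
        push_neg at hm'
        have hww : dist w₀ w < s := by rw [dist_comm]; exact mem_ball.mp hw
        have htri := dist_triangle w₀ w (x m)
        have hd : ((m:ℝ)+1)⁻¹ ≤ dist w (x m) := by linarith
        have h1 : (1:ℝ) ≤ ((m:ℝ)+1) * dist w (x m) := by
          calc (1:ℝ) = ((m:ℝ)+1) * ((m:ℝ)+1)⁻¹ := (mul_inv_cancel₀ (by positivity)).symm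
            _ ≤ ((m:ℝ)+1) * dist w (x m) := by
                apply mul_le_mul_of_nonneg_left hd (by positivity)
        have hge : (1:ℝ) ≤ ((m:ℝ)+1)⁻¹ + ((m:ℝ)+1) * dist w (x m) := by
          have : (0:ℝ) ≤ ((m:ℝ)+1)⁻¹ := by positivity
          linarith
        simp only [hhdef]
        exact min_eq_left hge
      apply le_antisymm
      · exact Finset.le_inf' _ _ (fun m _ => hfle m w)
      · apply le_ciInf
        intro m
        by_cases hmem : m ∈ insert 0 hfin.toFinset
        · exact Finset.inf'_le _ hmem
        · rw [hout m hmem]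
          exact (Finset.inf'_le _ (Finset.mem_insert_self 0 _)).trans (hle1 0 w)
    have hcont : Continuous f := by
      rw [continuous_iff_continuousAt]
      intro w₀
      obtain ⟨s, hs, S, hS, heq⟩ := hrep w₀
      have hFc : Continuous fun w => S.inf' hS fun m => h m w := by
        apply cont_inf'
        intro m
        exact continuous_const.min
          (continuous_const.add (continuous_const.mul (continuous_id.dist continuous_const)))
      exact hFc.continuousAt.congr
        (Filter.eventuallyEq_of_mem (ball_mem_nhds w₀ hs) (fun w hw => (heq w hw).symm))
    have hpos : ∀ w, 0 < f w := by
      intro w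
      obtain ⟨s, hs, S, hS, heq⟩ := hrep w
      rw [heq w (mem_ball_self hs), Finset.lt_inf'_iff]
      intro m _
      exact lt_of_lt_of_le (by positivity) (hlow m w)
    have hfab : ∀ ε > 0, ∃ δ > 0, ∀ A : Set X, EMetric.diam A < ENNReal.ofReal δ →
        ∃ B : Finset ℝ, f '' A ⊆ ⋃ b ∈ B, Metric.ball b ε := by
      intro ε hε
      refine ⟨1, one_pos, fun A _ => ?_⟩
      have hbd : Bornology.IsBounded (f '' A) := by
        rw [isBounded_iff_forall_norm_le]
        refine ⟨1, ?_⟩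
        rintro v ⟨w, _, rfl⟩
        rw [Real.norm_eq_abs, abs_of_pos (hpos w)]
        exact (hfle 0 w).trans (hle1 0 w)
      exact cover_of_bounded hbd hε
    obtain ⟨δ, hδ, hcov⟩ := H f hcont hfab (fun w => (hpos w).ne') 1 one_pos
    obtain ⟨N, hNinf, hNd⟩ := hx (δ/2) (half_pos hδ)
    have hdiam : EMetric.diam (x '' N) < ENNReal.ofReal δ := by
      have hle : EMetric.diam (x '' N) ≤ ENNReal.ofReal (δ/2) := by
        apply EMetric.diam_le
        rintro a ⟨n, hn, rfl⟩ b ⟨j, hj, rfl⟩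
        rw [edist_dist]
        exact ENNReal.ofReal_le_ofReal (hNd n hn j hj).le
      exact lt_of_le_of_lt hle ((ENNReal.ofReal_lt_ofReal_iff hδ).mpr (by linarith))
    obtain ⟨B, hB⟩ := hcov (x '' N) hdiam
    have hbd : Bornology.IsBounded (⋃ b ∈ B, ball b (1:ℝ)) :=
      (Bornology.isBounded_biUnion B.finite_toSet).mpr (fun b _ => Metric.isBounded_ball)
    obtain ⟨C, hC⟩ := isBounded_iff_forall_norm_le.mp (hbd.subset hB)
    obtain ⟨m, hmN, hmC⟩ := hNinf.exists_gt (Nat.ceil C)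
    have h1 : ‖(f (x m))⁻¹‖ ≤ C := hC _ ⟨x m, ⟨m, hmN, rfl⟩, rfl⟩
    have h2 : ((m:ℝ)+1) ≤ (f (x m))⁻¹ := by
      have := inv_anti₀ (hpos (x m)) (hfx m)
      rwa [inv_inv] at this
    rw [Real.norm_eq_abs, abs_of_pos (inv_pos.mpr (hpos (x m)))] at h1
    have h3 : C < (m:ℝ) := lt_of_le_of_lt (Nat.le_ceil C) (Nat.cast_lt.mpr hmC)
    linarith
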